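/- Let t > 0, s > 0, 1 ≤ p < ∞, and suppose p·t = 2s. Then for every f ∈ L^p(ℂⁿ, dv_s), the function w ↦ |e^{t⟨z,w⟩}| |f(w)| is dv_t-integrable for a.e. z ∈ ℂⁿ, and ∫_{ℂⁿ} |S_t f|^p dv_s ≤ ∫_{ℂⁿ} |T_t (|f|)|^p dv_s ≤ 2^{np} ∫_{ℂⁿ} |f|^p dv_s, where S_t f(z) = ∫_{ℂⁿ} e^{t⟨z,w⟩} f(w) dv_t(w) and T_t g(z) = ∫_{ℂⁿ} |e^{t⟨z,w⟩}| g(w) dv_t(w). -/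

import Mathlib

open MeasureTheory

/-- `|z|² = |z₁|² + ⋯ + |zₙ|²` on `ℂⁿ`. -/
noncomputable def nsq {n : ℕ} (z : Fin n → ℂ) : ℝ := ∑ i, Complex.normSq (z i)

/-- `⟨z,w⟩ = z₁·conj w₁ + ⋯ + zₙ·conj wₙ` on `ℂⁿ`. -/
noncomputable def herm {n : ℕ} (z w : Fin n → ℂ) : ℂ := ∑ i, z i * (starRingEnd ℂ) (w i)

/-- The Gaussian probability measure `dv_t(z) = (t/π)^n e^{-t|z|²} dv(z)` on `ℂⁿ`. -/
noncomputable def gaussMeasure (n : ℕ) (t : ℝ) : Measure (Fin n → ℂ) :=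
  volume.withDensity fun z => ENNReal.ofReal ((t / Real.pi) ^ n * Real.exp (-t * nsq z))

open scoped ENNReal


lemma nsq_cont {n : ℕ} : Continuous (nsq (n := n)) := by
  unfold nsq; continuity

lemma herm_cont {n : ℕ} :
    Continuous (fun zw : (Fin n → ℂ) × (Fin n → ℂ) => herm zw.1 zw.2) := by
  unfold herm
  exact continuous_finset_sum _ fun i _ =>
    ((continuous_apply i).comp continuous_fst).mul
      (Complex.continuous_conj.comp ((continuous_apply i).comp continuous_snd))

lemma gauss_eq_c {c : ℝ} (z : ℂ) :
    Real.exp (-(c * z.re ^ 2)) * Real.exp (-(c * z.im ^ 2)) = Real.exp (-(c * Complex.normSq z)) := by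
  rw [← Real.exp_add]; congr 1; rw [Complex.normSq_apply]; ring

lemma gauss_integrable_c {c : ℝ} (hc : 0 < c) :
    Integrable (fun z : ℂ => Real.exp (-(c * Complex.normSq z))) := by
  have h := (MeasurePreserving.integrable_comp_emb Complex.volume_preserving_equiv_real_prod
    Complex.measurableEquivRealProd.measurableEmbedding
    (g := fun p : ℝ × ℝ => Real.exp (-(c * p.1 ^ 2)) * Real.exp (-(c * p.2 ^ 2)))).mpr ?_
  · exact h.congr (Filter.Eventually.of_forall fun z => gauss_eq_c z)
  · rw [Measure.volume_eq_prod]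
    exact ((integrable_exp_neg_mul_sq hc).mul_prod (integrable_exp_neg_mul_sq hc)).congr
      (Filter.Eventually.of_forall fun p => by simp only [neg_mul])

lemma gauss_integral_c {c : ℝ} (hc : 0 < c) :
    ∫ z : ℂ, Real.exp (-(c * Complex.normSq z)) = Real.pi / c := by
  have h := MeasurePreserving.integral_comp' Complex.volume_preserving_equiv_real_prod
    (fun p : ℝ × ℝ => Real.exp (-(c * p.1 ^ 2)) * Real.exp (-(c * p.2 ^ 2)))
  have h2 : (fun z : ℂ => Real.exp (-(c * Complex.normSq z)))
      = fun z : ℂ => Real.exp (-(c * (Complex.measurableEquivRealProd z).1 ^ 2)) *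
        Real.exp (-(c * (Complex.measurableEquivRealProd z).2 ^ 2)) :=
    funext fun z => (gauss_eq_c z).symm
  rw [h2, h, Measure.volume_eq_prod,
    integral_prod_mul (f := fun x : ℝ => Real.exp (-(c * x ^ 2)))
      (g := fun x : ℝ => Real.exp (-(c * x ^ 2)))]
  have : ∀ x : ℝ, Real.exp (-(c * x ^ 2)) = Real.exp (-c * x ^ 2) := fun x => by rw [neg_mul]
  simp_rw [this, integral_gaussian]
  exact Real.mul_self_sqrt (div_nonneg Real.pi_pos.le hc.le)

lemma gauss_lintegral (n : ℕ) {c : ℝ} (hc : 0 < c) :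
    ∫⁻ z : Fin n → ℂ, ENNReal.ofReal (Real.exp (-(c * nsq z)))
      = ENNReal.ofReal ((Real.pi / c) ^ n) := by
  have hprod : ∀ z : Fin n → ℂ, Real.exp (-(c * nsq z))
      = ∏ i, Real.exp (-(c * Complex.normSq (z i))) := by
    intro z
    rw [← Real.exp_sum]
    congr 1
    rw [nsq, Finset.mul_sum, ← Finset.sum_neg_distrib]
  have hint : Integrable (fun z : Fin n → ℂ => ∏ i, Real.exp (-(c * Complex.normSq (z i)))) :=
    Integrable.fintype_prod (f := fun _ z => Real.exp (-(c * Complex.normSq z)))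
      fun _ => gauss_integrable_c hc
  calc ∫⁻ z : Fin n → ℂ, ENNReal.ofReal (Real.exp (-(c * nsq z)))
      = ∫⁻ z : Fin n → ℂ, ENNReal.ofReal (∏ i, Real.exp (-(c * Complex.normSq (z i)))) := by
        simp_rw [hprod]
    _ = ENNReal.ofReal (∫ z : Fin n → ℂ, ∏ i, Real.exp (-(c * Complex.normSq (z i)))) :=
        (ofReal_integral_eq_lintegral_ofReal hint (Filter.Eventually.of_forall fun z =>
          Finset.prod_nonneg fun i _ => (Real.exp_pos _).le)).symm
    _ = ENNReal.ofReal ((Real.pi / c) ^ n) := by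
        rw [MeasureTheory.volume_pi, integral_fintype_prod_eq_pow (ι := Fin n) (fun z : ℂ => Real.exp (-(c * Complex.normSq z))),
          gauss_integral_c hc, Fintype.card_fin]

lemma nsq_sub_expand {n : ℕ} (z w : Fin n → ℂ) :
    nsq (w - z) = nsq w + nsq z - 2 * (herm z w).re := by
  unfold nsq herm
  rw [Complex.re_sum]
  have : ∀ i : Fin n, Complex.normSq ((w - z) i)
      = Complex.normSq (w i) + Complex.normSq (z i) - 2 * (z i * (starRingEnd ℂ) (w i)).re := by
    intro i
    rw [Pi.sub_apply, Complex.normSq_sub]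
    congr 2
    rw [← Complex.conj_re (w i * (starRingEnd ℂ) (z i))]
    congr 1
    rw [map_mul, Complex.conj_conj]
    ring
  simp_rw [this]
  rw [Finset.sum_sub_distrib, Finset.sum_add_distrib, ← Finset.mul_sum]

section Main
variable {n : ℕ}

lemma dens_meas (n : ℕ) (c : ℝ) :
    Measurable (fun z : Fin n → ℂ => ENNReal.ofReal ((c / Real.pi) ^ n * Real.exp (-c * nsq z))) :=
  (ENNReal.measurable_ofReal.comp
    ((continuous_const.mul ((Real.continuous_exp.comp (continuous_const.mul nsq_cont)))).measurable))

lemma lintegral_gaussMeasure {c : ℝ} {fn : (Fin n → ℂ) → ℝ≥0∞} (hfn : AEMeasurable fn (gaussMeasure n c)) :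
    ∫⁻ z, fn z ∂(gaussMeasure n c)
      = ∫⁻ z, ENNReal.ofReal ((c / Real.pi) ^ n * Real.exp (-c * nsq z)) * fn z := by
  rw [gaussMeasure, lintegral_withDensity_eq_lintegral_mul₀' (dens_meas n c).aemeasurable hfn]
  rfl

instance gaussSFinite (n : ℕ) (c : ℝ) : SFinite (gaussMeasure n c) := by
  unfold gaussMeasure; infer_instance

lemma gauss_ac (n : ℕ) (c : ℝ) : gaussMeasure n c ≪ (volume : Measure (Fin n → ℂ)) :=
  withDensity_absolutelyContinuous _ _

lemma ac_gauss (n : ℕ) {c : ℝ} (hc : 0 < c) : (volume : Measure (Fin n → ℂ)) ≪ gaussMeasure n c :=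
  withDensity_absolutelyContinuous' (dens_meas n c).aemeasurable
    (Filter.Eventually.of_forall fun z => (ENNReal.ofReal_pos.mpr
      (mul_pos (pow_pos (div_pos hc Real.pi_pos) n) (Real.exp_pos _))).ne')

end Main

lemma nsq_sub_comm {n : ℕ} (a b : Fin n → ℂ) : nsq (a - b) = nsq (b - a) := by
  unfold nsq
  refine Finset.sum_congr rfl fun i _ => ?_
  rw [Pi.sub_apply, Pi.sub_apply, ← Complex.normSq_neg, neg_sub]

lemma main_est (n : ℕ) (p t s : ℝ) (hp : 1 ≤ p) (ht : 0 < t) (hs : 0 < s)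
    (hpt : p * t = 2 * s) (g : (Fin n → ℂ) → ℝ≥0∞) (hgm : Measurable g)
    (hgt : ∀ w, g w ≠ ⊤) :
    ∫⁻ z, (∫⁻ w, ENNReal.ofReal (Real.exp (t * (herm z w).re)) * g w ∂(gaussMeasure n t)) ^ p
        ∂(gaussMeasure n s)
      ≤ ENNReal.ofReal (2 ^ ((n : ℝ) * p)) * ∫⁻ z, g z ^ p ∂(gaussMeasure n s) := by
  have hπ := Real.pi_pos
  have hp0 : (0 : ℝ) < p := lt_of_lt_of_le one_pos hp
  have hts : t / 2 * p = s := by nlinarith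
  set v : Measure (Fin n → ℂ) := (volume : Measure (Fin n → ℂ)) with hv
  set γ : (Fin n → ℂ) → ℝ≥0∞ := fun u => ENNReal.ofReal (Real.exp (-(t / 2 * nsq u))) with hγdef
  have hγm : Measurable γ := ENNReal.measurable_ofReal.comp
    ((Real.continuous_exp.comp (continuous_const.mul nsq_cont).neg).measurable)
  have hγ0 : ∀ u, γ u ≠ 0 := fun u => (ENNReal.ofReal_pos.mpr (Real.exp_pos _)).ne'
  have hγtop : ∀ u, γ u ≠ ⊤ := fun _ => ENNReal.ofReal_ne_top
  set Gm : (Fin n → ℂ) → ℝ≥0∞ := fun w => γ w * g w with hGmdef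
  have hGmm : Measurable Gm := hγm.mul hgm
  have hGmt : ∀ w, Gm w ≠ ⊤ := fun w => ENNReal.mul_ne_top (hγtop w) (hgt w)
  set Ct := ENNReal.ofReal ((t / Real.pi) ^ n) with hCt
  set Cs := ENNReal.ofReal ((s / Real.pi) ^ n) with hCs
  set aT := ENNReal.ofReal ((2 * Real.pi / t) ^ n) with haTdef
  have haT0 : aT ≠ 0 := (ENNReal.ofReal_pos.mpr (by positivity)).ne'
  have haTt : aT ≠ ⊤ := ENNReal.ofReal_ne_top
  set A : (Fin n → ℂ) → ℝ≥0∞ := fun z => ENNReal.ofReal (Real.exp (t / 2 * nsq z)) with hAdef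
  have hAm : Measurable A := ENNReal.measurable_ofReal.comp
    ((Real.continuous_exp.comp (continuous_const.mul nsq_cont)).measurable)
  set J : (Fin n → ℂ) → ℝ≥0∞ := fun z => ∫⁻ w, γ (w - z) * Gm w ∂v with hJdef
  have hsubm : Measurable (fun zw : (Fin n → ℂ) × (Fin n → ℂ) => γ (zw.2 - zw.1)) :=
    hγm.comp (measurable_snd.sub measurable_fst)
  have hJm : Measurable J := Measurable.lintegral_prod_right
    (f := fun z w => γ (w - z) * Gm w) (hsubm.mul (hGmm.comp measurable_snd))
  have haT : ∫⁻ u, γ u ∂v = aT := by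
    rw [hγdef, gauss_lintegral n (by positivity : (0:ℝ) < t / 2), haTdef]
    congr 2
    field_simp
  have haTz : ∀ z, ∫⁻ w, γ (w - z) ∂v = aT := fun z => by
    rw [lintegral_sub_right_eq_self (fun w => γ w) z, haT]
  -- kernel rewrite
  have hkerpt : ∀ z w : Fin n → ℂ,
      ENNReal.ofReal ((t / Real.pi) ^ n * Real.exp (-t * nsq w)) *
        (ENNReal.ofReal (Real.exp (t * (herm z w).re)) * g w)
      = Ct * (A z * (γ (w - z) * Gm w)) := by
    intro z w
    have hexp : (t / Real.pi) ^ n * Real.exp (-t * nsq w) * Real.exp (t * (herm z w).re)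
        = (t / Real.pi) ^ n * (Real.exp (t / 2 * nsq z) *
          (Real.exp (-(t / 2 * nsq (w - z))) * Real.exp (-(t / 2 * nsq w)))) := by
      rw [mul_assoc, ← Real.exp_add, ← Real.exp_add, ← Real.exp_add]
      congr 2
      rw [nsq_sub_expand z w]
      ring
    calc ENNReal.ofReal ((t / Real.pi) ^ n * Real.exp (-t * nsq w)) *
          (ENNReal.ofReal (Real.exp (t * (herm z w).re)) * g w)
        = ENNReal.ofReal ((t / Real.pi) ^ n * Real.exp (-t * nsq w) *
            Real.exp (t * (herm z w).re)) * g w := by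
          rw [← mul_assoc, ← ENNReal.ofReal_mul (by positivity)]
      _ = ENNReal.ofReal ((t / Real.pi) ^ n * (Real.exp (t / 2 * nsq z) *
            (Real.exp (-(t / 2 * nsq (w - z))) * Real.exp (-(t / 2 * nsq w))))) * g w := by
          rw [hexp]
      _ = Ct * (A z * (γ (w - z) * Gm w)) := by
          rw [ENNReal.ofReal_mul (by positivity), ENNReal.ofReal_mul (Real.exp_pos _).le,
            ENNReal.ofReal_mul (Real.exp_pos _).le, hCt, hAdef, hγdef, hGmdef]
          ring
  -- I rewrite
  have hI2 : ∀ z, (∫⁻ w, ENNReal.ofReal (Real.exp (t * (herm z w).re)) * g w ∂(gaussMeasure n t))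
      = Ct * (A z * J z) := by
    intro z
    have hm : Measurable fun w => ENNReal.ofReal (Real.exp (t * (herm z w).re)) * g w :=
      (ENNReal.measurable_ofReal.comp ((Real.continuous_exp.comp (continuous_const.mul
        (Complex.continuous_re.comp (herm_cont.comp (Continuous.prodMk_right z))))).measurable)).mul hgm
    rw [lintegral_gaussMeasure hm.aemeasurable]
    rw [lintegral_congr fun w => hkerpt z w]
    rw [lintegral_const_mul' Ct _ ENNReal.ofReal_ne_top,
      lintegral_const_mul' (A z) _ ENNReal.ofReal_ne_top]
  -- Hölder
  have hHold : ∀ z, J z ^ p ≤ aT ^ (p - 1) * ∫⁻ w, γ (w - z) * Gm w ^ p ∂v := by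
    intro z
    rcases eq_or_lt_of_le hp with h1 | h1
    · rw [← h1]
      simp only [ENNReal.rpow_one, sub_self, ENNReal.rpow_zero, one_mul, le_refl]
      exact le_rfl
    · set q := Real.conjExponent p with hqdef
      have hpq : p.HolderConjugate q := Real.HolderConjugate.conjExponent h1
      have hkey := ENNReal.lintegral_mul_le_Lp_mul_Lq v hpq
        (f := fun w => γ (w - z) ^ (1 / p) * Gm w) (g := fun w => γ (w - z) ^ (1 / q))
        (((hγm.comp (measurable_id.sub measurable_const)).pow_const _).mul hGmm).aemeasurable
        ((hγm.comp (measurable_id.sub measurable_const)).pow_const _).aemeasurable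
      have hcomb : ∀ w : Fin n → ℂ,
          ((fun w => γ (w - z) ^ (1 / p) * Gm w) * fun w => γ (w - z) ^ (1 / q)) w
          = γ (w - z) * Gm w := by
        intro w
        simp only [Pi.mul_apply]
        rw [mul_right_comm, ← ENNReal.rpow_add _ _ (hγ0 _) (hγtop _)]
        rw [show 1 / p + 1 / q = 1 by
          rw [one_div, one_div]; exact hpq.inv_add_inv_eq_one]
        rw [ENNReal.rpow_one]
      have hfp : ∀ w : Fin n → ℂ, (γ (w - z) ^ (1 / p) * Gm w) ^ p = γ (w - z) * Gm w ^ p := by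
        intro w
        rw [ENNReal.mul_rpow_of_nonneg _ _ hp0.le, ← ENNReal.rpow_mul,
          one_div_mul_cancel hp0.ne', ENNReal.rpow_one]
      have hgq : ∀ w : Fin n → ℂ, (γ (w - z) ^ (1 / q)) ^ q = γ (w - z) := by
        intro w
        rw [← ENNReal.rpow_mul, one_div_mul_cancel hpq.symm.ne_zero, ENNReal.rpow_one]
      rw [lintegral_congr hcomb] at hkey
      simp_rw [hfp, hgq] at hkey
      rw [haTz z] at hkey
      calc J z ^ p ≤ ((∫⁻ w, γ (w - z) * Gm w ^ p ∂v) ^ (1 / p) * aT ^ (1 / q)) ^ p :=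
            ENNReal.rpow_le_rpow hkey hp0.le
        _ = aT ^ (p - 1) * ∫⁻ w, γ (w - z) * Gm w ^ p ∂v := by
            rw [ENNReal.mul_rpow_of_nonneg _ _ hp0.le, ← ENNReal.rpow_mul,
              one_div_mul_cancel hp0.ne', ENNReal.rpow_one, ← ENNReal.rpow_mul]
            rw [show 1 / q * p = p - 1 by
              rw [one_div, mul_comm, ← div_eq_mul_inv, hpq.div_conj_eq_sub_one]]
            exact mul_comm _ _
  -- integrate Hölder
  have hJp : ∫⁻ z, J z ^ p ∂v ≤ aT ^ p * ∫⁻ w, Gm w ^ p ∂v := by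
    have hswapm : AEMeasurable (Function.uncurry fun z w : Fin n → ℂ =>
        γ (w - z) * Gm w ^ p) (v.prod v) :=
      (hsubm.mul ((hGmm.comp measurable_snd).pow_const _)).aemeasurable
    calc ∫⁻ z, J z ^ p ∂v
        ≤ ∫⁻ z, aT ^ (p - 1) * ∫⁻ w, γ (w - z) * Gm w ^ p ∂v ∂v := lintegral_mono hHold
      _ = aT ^ (p - 1) * ∫⁻ z, ∫⁻ w, γ (w - z) * Gm w ^ p ∂v ∂v :=
          lintegral_const_mul' _ _ (ENNReal.rpow_ne_top_of_nonneg (by linarith) haTt)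
      _ = aT ^ (p - 1) * ∫⁻ w, ∫⁻ z, γ (w - z) * Gm w ^ p ∂v ∂v := by
          rw [lintegral_lintegral_swap hswapm]
      _ = aT ^ (p - 1) * ∫⁻ w, aT * Gm w ^ p ∂v := by
          congr 1
          refine lintegral_congr fun w => ?_
          rw [lintegral_mul_const' _ _ (ENNReal.rpow_ne_top_of_nonneg hp0.le (hGmt w))]
          have hγsym : ∀ a b : Fin n → ℂ, γ (a - b) = γ (b - a) := fun a b => by
            simp only [hγdef]; rw [nsq_sub_comm]
          rw [show (fun z => γ (w - z)) = fun z => γ (z - w) from funext fun z => hγsym w z]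
          rw [lintegral_sub_right_eq_self (fun u => γ u) w, haT]
      _ = aT ^ (p - 1) * (aT * ∫⁻ w, Gm w ^ p ∂v) := by
          rw [lintegral_const_mul' aT _ haTt]
      _ = aT ^ p * ∫⁻ w, Gm w ^ p ∂v := by
          rw [← mul_assoc]
          congr 1
          nth_rewrite 2 [← ENNReal.rpow_one aT]
          rw [← ENNReal.rpow_add _ _ haT0 haTt, sub_add_cancel]
  -- density cancellation
  have hCsA : ∀ z : Fin n → ℂ,
      ENNReal.ofReal ((s / Real.pi) ^ n * Real.exp (-s * nsq z)) * A z ^ p = Cs := by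
    intro z
    simp only [hAdef]
    rw [ENNReal.ofReal_rpow_of_nonneg (Real.exp_pos _).le hp0.le, ← Real.exp_mul,
      ← ENNReal.ofReal_mul (by positivity), hCs]
    congr 1
    rw [mul_assoc, ← Real.exp_add]
    rw [show -s * nsq z + t / 2 * nsq z * p = 0 by rw [← hts]; ring, Real.exp_zero, mul_one]
  -- LHS identity
  have hLHS : ∫⁻ z, (∫⁻ w, ENNReal.ofReal (Real.exp (t * (herm z w).re)) * g w
        ∂(gaussMeasure n t)) ^ p ∂(gaussMeasure n s)
      = Ct ^ p * (Cs * ∫⁻ z, J z ^ p ∂v) := by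
    have hCtJ : Measurable fun z => (Ct * (A z * J z)) ^ p :=
      ((measurable_const.mul (hAm.mul hJm)).pow_const p)
    calc ∫⁻ z, (∫⁻ w, ENNReal.ofReal (Real.exp (t * (herm z w).re)) * g w
          ∂(gaussMeasure n t)) ^ p ∂(gaussMeasure n s)
        = ∫⁻ z, (Ct * (A z * J z)) ^ p ∂(gaussMeasure n s) :=
          lintegral_congr fun z => by rw [hI2 z]
      _ = ∫⁻ z, ENNReal.ofReal ((s / Real.pi) ^ n * Real.exp (-s * nsq z)) *
            (Ct * (A z * J z)) ^ p ∂v := lintegral_gaussMeasure hCtJ.aemeasurable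
      _ = ∫⁻ z, (ENNReal.ofReal ((s / Real.pi) ^ n * Real.exp (-s * nsq z)) * A z ^ p) *
            (Ct ^ p * J z ^ p) ∂v := by
          refine lintegral_congr fun z => ?_
          rw [ENNReal.mul_rpow_of_nonneg _ _ hp0.le, ENNReal.mul_rpow_of_nonneg _ _ hp0.le]
          ring
      _ = ∫⁻ z, Cs * (Ct ^ p * J z ^ p) ∂v := lintegral_congr fun z => by rw [hCsA z]
      _ = Cs * (Ct ^ p * ∫⁻ z, J z ^ p ∂v) := by
          rw [lintegral_const_mul' Cs _ ENNReal.ofReal_ne_top,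
            lintegral_const_mul' (Ct ^ p) _
              (ENNReal.rpow_ne_top_of_nonneg hp0.le ENNReal.ofReal_ne_top)]
      _ = Ct ^ p * (Cs * ∫⁻ z, J z ^ p ∂v) := by ring
  -- RHS identity
  have hRHS : ∫⁻ z, g z ^ p ∂(gaussMeasure n s) = Cs * ∫⁻ w, Gm w ^ p ∂v := by
    calc ∫⁻ z, g z ^ p ∂(gaussMeasure n s)
        = ∫⁻ z, ENNReal.ofReal ((s / Real.pi) ^ n * Real.exp (-s * nsq z)) * g z ^ p ∂v :=
          lintegral_gaussMeasure (hgm.pow_const p).aemeasurable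
      _ = ∫⁻ z, Cs * Gm z ^ p ∂v := by
          refine lintegral_congr fun z => ?_
          simp only [hGmdef]
          rw [ENNReal.mul_rpow_of_nonneg _ _ hp0.le]
          rw [show (γ z : ℝ≥0∞) ^ p = ENNReal.ofReal (Real.exp (-s * nsq z)) by
            simp only [hγdef]
            rw [ENNReal.ofReal_rpow_of_nonneg (Real.exp_pos _).le hp0.le, ← Real.exp_mul]
            congr 1
            rw [← hts]; ring]
          rw [ENNReal.ofReal_mul (by positivity), hCs]
          ring
      _ = Cs * ∫⁻ z, Gm z ^ p ∂v := lintegral_const_mul' Cs _ ENNReal.ofReal_ne_top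
  -- conclusion
  have hconst : Ct ^ p * aT ^ p = ENNReal.ofReal (2 ^ ((n : ℝ) * p)) := by
    rw [← ENNReal.mul_rpow_of_nonneg _ _ hp0.le, hCt, haTdef,
      ← ENNReal.ofReal_mul (by positivity)]
    rw [show (t / Real.pi) ^ n * (2 * Real.pi / t) ^ n = 2 ^ n by
      rw [← mul_pow]
      congr 1
      field_simp]
    rw [ENNReal.ofReal_rpow_of_nonneg (by positivity) hp0.le]
    congr 1
    rw [← Real.rpow_natCast 2 n, ← Real.rpow_mul (by norm_num)]
  calc ∫⁻ z, (∫⁻ w, ENNReal.ofReal (Real.exp (t * (herm z w).re)) * g w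
        ∂(gaussMeasure n t)) ^ p ∂(gaussMeasure n s)
      = Ct ^ p * (Cs * ∫⁻ z, J z ^ p ∂v) := hLHS
    _ ≤ Ct ^ p * (Cs * (aT ^ p * ∫⁻ w, Gm w ^ p ∂v)) :=
        mul_le_mul_right (mul_le_mul_right hJp _) _
    _ = (Ct ^ p * aT ^ p) * (Cs * ∫⁻ w, Gm w ^ p ∂v) := by ring
    _ = ENNReal.ofReal (2 ^ ((n : ℝ) * p)) * ∫⁻ z, g z ^ p ∂(gaussMeasure n s) := by
        rw [hconst, hRHS]



theorem stmt10 (n : ℕ) (p t s : ℝ) (hp : 1 ≤ p) (ht : 0 < t) (hs : 0 < s)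
    (hpt : p * t = 2 * s)
    (f : (Fin n → ℂ) → ℂ) (hf : MemLp f (ENNReal.ofReal p) (gaussMeasure n s)) :
    (∀ᵐ z ∂(volume : Measure (Fin n → ℂ)),
      Integrable (fun w => ‖Complex.exp ((t : ℂ) * herm z w)‖ * ‖f w‖)
        (gaussMeasure n t)) ∧
    ∫⁻ z, ENNReal.ofReal
        (‖∫ w, Complex.exp ((t : ℂ) * herm z w) * f w ∂(gaussMeasure n t)‖ ^ p)
      ∂(gaussMeasure n s)
      ≤ ∫⁻ z, ENNReal.ofReal
          ((∫ w, ‖Complex.exp ((t : ℂ) * herm z w)‖ * ‖f w‖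
              ∂(gaussMeasure n t)) ^ p)
        ∂(gaussMeasure n s) ∧
    ∫⁻ z, ENNReal.ofReal
        ((∫ w, ‖Complex.exp ((t : ℂ) * herm z w)‖ * ‖f w‖
            ∂(gaussMeasure n t)) ^ p)
      ∂(gaussMeasure n s)
      ≤ ENNReal.ofReal (2 ^ ((n : ℝ) * p)) *
        ∫⁻ z, ENNReal.ofReal (‖f z‖ ^ p) ∂(gaussMeasure n s) := by
  have hπ := Real.pi_pos
  have hp0 : (0 : ℝ) < p := lt_of_lt_of_le one_pos hp
  obtain ⟨f₀, hf₀m, hffs⟩ : ∃ f₀, StronglyMeasurable f₀ ∧ f =ᵐ[gaussMeasure n s] f₀ :=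
    ⟨hf.1.mk f, hf.1.stronglyMeasurable_mk, hf.1.ae_eq_mk⟩
  have hffv : f =ᵐ[(volume : Measure (Fin n → ℂ))] f₀ := (ac_gauss n hs).ae_eq hffs
  have hfft : f =ᵐ[gaussMeasure n t] f₀ := (gauss_ac n t).ae_eq hffv
  set g : (Fin n → ℂ) → ℝ≥0∞ := fun w => ENNReal.ofReal (‖f₀ w‖) with hgdef
  have hgm : Measurable g :=
    ENNReal.measurable_ofReal.comp (continuous_norm.measurable.comp hf₀m.measurable)
  set I : (Fin n → ℂ) → ℝ≥0∞ :=
    fun z => ∫⁻ w, ENNReal.ofReal (Real.exp (t * (herm z w).re)) * g w ∂(gaussMeasure n t)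
    with hIdef
  have habs : ∀ z w : Fin n → ℂ,
      ‖Complex.exp ((t : ℂ) * herm z w)‖ = Real.exp (t * (herm z w).re) := by
    intro z w
    rw [Complex.norm_exp]
    congr 1
    simp [Complex.mul_re]
  -- the kernel is jointly measurable
  have hkerm : Measurable (Function.uncurry fun z w : Fin n → ℂ =>
      ENNReal.ofReal (Real.exp (t * (herm z w).re)) * g w) := by
    refine Measurable.mul (f := fun zw : (Fin n → ℂ) × (Fin n → ℂ) =>
      ENNReal.ofReal (Real.exp (t * (herm zw.1 zw.2).re))) (g := fun zw => g zw.2) ?_ ?_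
    · exact ENNReal.measurable_ofReal.comp
        ((Real.continuous_exp.comp
          ((continuous_const.mul (Complex.continuous_re.comp herm_cont)))).measurable)
    · exact hgm.comp measurable_snd
  have hImeas : Measurable I := Measurable.lintegral_prod_right hkerm
  -- MAIN ESTIMATE
  have hmain : ∫⁻ z, I z ^ p ∂(gaussMeasure n s)
      ≤ ENNReal.ofReal (2 ^ ((n : ℝ) * p)) * ∫⁻ z, g z ^ p ∂(gaussMeasure n s) := by
    simp only [hIdef]
    exact main_est n p t s hp ht hs hpt g hgm (fun w => ENNReal.ofReal_ne_top)
  have hgp_eq : ∫⁻ z, g z ^ p ∂(gaussMeasure n s)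
      = ∫⁻ z, ENNReal.ofReal (‖f z‖ ^ p) ∂(gaussMeasure n s) := by
    refine lintegral_congr_ae ?_
    filter_upwards [hffs] with z hz
    rw [hgdef, ENNReal.ofReal_rpow_of_nonneg (norm_nonneg _) hp0.le, hz]
  have hRfin : ∫⁻ z, ENNReal.ofReal (‖f z‖ ^ p) ∂(gaussMeasure n s) ≠ ⊤ := by
    have h1 := hf.eLpNorm_lt_top
    rw [eLpNorm_eq_lintegral_rpow_enorm_toReal (ENNReal.ofReal_pos.mpr hp0).ne' ENNReal.ofReal_ne_top,
      ENNReal.toReal_ofReal hp0.le] at h1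
    have h2 : ∫⁻ z, ‖f z‖ₑ ^ p ∂(gaussMeasure n s) < ⊤ :=
      (ENNReal.rpow_lt_top_iff_of_pos (one_div_pos.mpr hp0)).mp h1
    refine ne_of_lt (lt_of_le_of_lt (le_of_eq (lintegral_congr fun z => ?_)) h2)
    rw [← ofReal_norm,
      ENNReal.ofReal_rpow_of_nonneg (norm_nonneg _) hp0.le]
  have haes : ∀ᵐ z ∂(gaussMeasure n s), I z < ⊤ := by
    have hfin : ∫⁻ z, I z ^ p ∂(gaussMeasure n s) ≠ ⊤ :=
      (lt_of_le_of_lt hmain (by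
        rw [hgp_eq]
        exact ENNReal.mul_lt_top ENNReal.ofReal_lt_top hRfin.lt_top)).ne
    filter_upwards [ae_lt_top (hImeas.pow_const p) hfin] with z hz
    exact (ENNReal.rpow_lt_top_iff_of_pos hp0).mp hz
  have haev : ∀ᵐ z ∂(volume : Measure (Fin n → ℂ)), I z < ⊤ :=
    (ac_gauss n hs).ae_le haes
  -- a.e. rewriting of the inner lintegral
  have hIeq : ∀ z, ∫⁻ w, ENNReal.ofReal (‖Complex.exp ((t : ℂ) * herm z w)‖
      * ‖f w‖) ∂(gaussMeasure n t) = I z := by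
    intro z
    refine lintegral_congr_ae ?_
    filter_upwards [hfft] with w hw
    rw [habs, hw, ENNReal.ofReal_mul (Real.exp_pos _).le]
  have haesm : ∀ z, AEStronglyMeasurable
      (fun w => ‖Complex.exp ((t : ℂ) * herm z w)‖ * ‖f w‖)
      (gaussMeasure n t) := by
    intro z
    refine AEStronglyMeasurable.congr (f := fun w =>
      ‖Complex.exp ((t : ℂ) * herm z w)‖ * ‖f₀ w‖) ?_ ?_
    · apply Measurable.aestronglyMeasurable
      refine Measurable.mul (f := fun w => ‖Complex.exp ((t : ℂ) * herm z w)‖)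
        (g := fun w => ‖f₀ w‖) ?_ ?_
      · exact continuous_norm.measurable.comp
          (Complex.continuous_exp.measurable.comp
            ((continuous_const.mul (herm_cont.comp (Continuous.prodMk_right z))).measurable))
      · exact continuous_norm.measurable.comp hf₀m.measurable
    · filter_upwards [hfft] with w hw
      rw [hw]
  have hint : ∀ z, I z < ⊤ → Integrable
      (fun w => ‖Complex.exp ((t : ℂ) * herm z w)‖ * ‖f w‖)
      (gaussMeasure n t) := by
    intro z hz
    refine ⟨haesm z, ?_⟩
    rw [hasFiniteIntegral_iff_norm]
    calc ∫⁻ w, ENNReal.ofReal ‖‖Complex.exp ((t : ℂ) * herm z w)‖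
          * ‖f w‖‖ ∂(gaussMeasure n t)
        = ∫⁻ w, ENNReal.ofReal (‖Complex.exp ((t : ℂ) * herm z w)‖
          * ‖f w‖) ∂(gaussMeasure n t) := by
          refine lintegral_congr fun w => ?_
          rw [Real.norm_of_nonneg (mul_nonneg (norm_nonneg _) (norm_nonneg _))]
      _ = I z := hIeq z
      _ < ⊤ := hz
  have hmidae : (fun z => ENNReal.ofReal
        ((∫ w, ‖Complex.exp ((t : ℂ) * herm z w)‖ * ‖f w‖
          ∂(gaussMeasure n t)) ^ p))
      =ᵐ[gaussMeasure n s] fun z => I z ^ p := by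
    filter_upwards [haes] with z hz
    have h1 : ∫ w, ‖Complex.exp ((t : ℂ) * herm z w)‖ * ‖f w‖
        ∂(gaussMeasure n t) = (I z).toReal := by
      rw [integral_eq_lintegral_of_nonneg_ae
        (Filter.Eventually.of_forall fun w =>
          mul_nonneg (norm_nonneg _) (norm_nonneg _)) (haesm z), hIeq z]
    rw [h1, ← ENNReal.ofReal_rpow_of_nonneg ENNReal.toReal_nonneg hp0.le,
      ENNReal.ofReal_toReal hz.ne]
  refine ⟨haev.mono fun z hz => hint z hz, ?_, ?_⟩
  · refine lintegral_mono fun z => ?_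
    refine ENNReal.ofReal_le_ofReal ?_
    refine Real.rpow_le_rpow (norm_nonneg _) ?_ hp0.le
    calc ‖∫ w, Complex.exp ((t : ℂ) * herm z w) * f w ∂(gaussMeasure n t)‖
        = ‖∫ w, Complex.exp ((t : ℂ) * herm z w) * f w ∂(gaussMeasure n t)‖ :=
          rfl
      _ ≤ ∫ w, ‖Complex.exp ((t : ℂ) * herm z w) * f w‖ ∂(gaussMeasure n t) :=
          norm_integral_le_integral_norm _
      _ = ∫ w, ‖Complex.exp ((t : ℂ) * herm z w)‖ * ‖f w‖
            ∂(gaussMeasure n t) := by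
          refine integral_congr_ae (Filter.Eventually.of_forall fun w => ?_)
          simp only [norm_mul]
  · rw [lintegral_congr_ae hmidae, ← hgp_eq]
    exact hmain
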